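/- For every Dec-POMDP ⟨I,S,Ā,Ō,T,O,R⟩ there exists an SDec-POMDP ⟨I,S,Ā,Ō,F,T',O',R⟩ with the same agents, states, joint actions, joint observations, and reward, with T'(s'|s,ā,τ̄) = T(s'|s,ā) and O'(ō'|s',ā,τ̄) = O(ō'|s',ā), whose selector functions satisfy g'(a_i^sel) = a_i and h'(o_i^sel) = o_i for every agent i and assign the empty set to the blackboard (g'(a_c^sel) = h'(o_c^sel) = ∅), so that τ̄ has no effect and F may be disregarded; conversely every SDec-POMDP reduces to a Dec-POMDP by adjoining a blackboard agent with τ = 0, augmenting the state space to S × (ℝ≥0)^n, augmenting the joint observation space by ∏_i (A_iO_i)*, and setting T'(⟨s',τ̄'⟩ | ⟨s,τ̄⟩, ā, ā') = F(τ̄' | s',ā',τ̄)·T(s' | s,ā,τ̄). Hence the SDec-POMDP and Dec-POMDP models are equivalent. -/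

import Mathlib

/-!
Statement 4: SDec-POMDP and Dec-POMDP models are equivalent (mutual reduction).
-/

open scoped NNReal

/-- A decentralized POMDP `⟨I,S,Ā,Ō,T,O,R⟩`: the same underlying model tuple as
the MPOMDP, but agents cannot explicitly share information. -/
structure DecPOMDP (I S : Type) (A O : I → Type) where
  T : S → (∀ i, A i) → PMF S
  Obs : S → (∀ i, A i) → PMF (∀ i, O i)
  R : S → (∀ i, A i) → ℝ

/-- A semi-decentralized POMDP `⟨I,S,Ā,Ō,F,T,O,R⟩` with sojourn-time kernel `F`
and selector functions `f,g,h` routing memories, actions, and observations to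
the blackboard memory and agent memories according to whether `τ_i = 0`. -/
structure SDecPOMDP (I S : Type) (A O : I → Type) where
  F : S → (∀ i, A i) → (I → ℝ≥0) → PMF (I → ℝ≥0)
  T : S → (∀ i, A i) → (I → ℝ≥0) → PMF S
  Obs : S → (∀ i, A i) → (I → ℝ≥0) → PMF (∀ i, O i)
  R : S → (∀ i, A i) → ℝ
  fSel : (I → ℝ≥0) → I → List (∀ j, Option (A j × O j)) →
    Option (List (∀ j, Option (A j × O j)))
  fSelC : (I → ℝ≥0) → (∀ j, List (A j × O j)) → (∀ j, Option (List (A j × O j)))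
  gSel : (I → ℝ≥0) → I → (∀ j, A j) → (∀ j, Option (A j))
  gSelC : (I → ℝ≥0) → (∀ j, A j) → (∀ j, Option (A j))
  hSel : (I → ℝ≥0) → I → (∀ j, O j) → (∀ j, Option (O j))
  hSelC : (I → ℝ≥0) → (∀ j, O j) → (∀ j, Option (O j))

/-- Actions of the agent set augmented with a blackboard agent. -/
def extA (I : Type) (A : I → Type) : Option I → Type
  | none => Unit
  | some i => A i

/-- Observations of the augmented agent set: the blackboard agent observes the
shared sequences of action–observation pairs `∏ i, (A_i O_i)*`. -/
def extO (I : Type) (A O : I → Type) : Option I → Type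
  | none => ∀ i, List (A i × O i)
  | some i => O i

/-- (1) Every Dec-POMDP embeds into an SDec-POMDP with the
same agents, states, joint actions, joint observations and reward, with
`T'(s'∣s,ā,τ̄) = T(s'∣s,ā)` and `O'(ō'∣s',ā,τ̄) = O(ō'∣s',ā)`, whose selector
functions return each agent its own action `a_i` and observation `o_i` only,
and assign the empty set to the blackboard (so `τ̄` has no effect and `F` can
be disregarded).  (2) Conversely every SDec-POMDP reduces to a Dec-POMDP by
adjoining a blackboard agent, augmenting the state space to `S × (ℝ≥0)^I`,
augmenting the joint observation space by `∏ i, (A_i O_i)*`, and setting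
`T'(⟨s',τ̄'⟩ ∣ ⟨s,τ̄⟩, ā) = F(τ̄' ∣ s',ā,τ̄) · T(s' ∣ s,ā,τ̄)`.  Hence the
SDec-POMDP and Dec-POMDP models are equivalent. -/
theorem sdecpomdp_decpomdp_model_equivalence :
    (∀ (I S : Type) (A O : I → Type) [Fintype I] [Fintype S]
        [∀ i, Fintype (A i)] [∀ i, Fintype (O i)],
      ∀ M : DecPOMDP I S A O,
        ∃ D : SDecPOMDP I S A O,
          D.R = M.R ∧
          (∀ s a τ, D.T s a τ = M.T s a) ∧
          (∀ s a τ, D.Obs s a τ = M.Obs s a) ∧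
          (∀ τ i a, D.gSel τ i a i = some (a i) ∧
            ∀ j, j ≠ i → D.gSel τ i a j = none) ∧
          (∀ τ i o, D.hSel τ i o i = some (o i) ∧
            ∀ j, j ≠ i → D.hSel τ i o j = none) ∧
          (∀ τ a j, D.gSelC τ a j = none) ∧
          (∀ τ o j, D.hSelC τ o j = none)) ∧
    (∀ (I S : Type) (A O : I → Type) [Fintype I] [Fintype S]
        [∀ i, Fintype (A i)] [∀ i, Fintype (O i)],
      ∀ D : SDecPOMDP I S A O,
        ∃ M : DecPOMDP (Option I) (S × (I → ℝ≥0)) (extA I A) (extO I A O),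
          (∀ (s : S) (τ : I → ℝ≥0) (a : ∀ j, extA I A j) (s' : S) (τ' : I → ℝ≥0),
            M.T (s, τ) a (s', τ') =
              D.F s' (fun i => a (some i)) τ τ' *
                D.T s (fun i => a (some i)) τ s') ∧
          (∀ (s' : S) (τ' : I → ℝ≥0) (a : ∀ j, extA I A j),
            (M.Obs (s', τ') a).map (fun o i => o (some i)) =
              D.Obs s' (fun i => a (some i)) τ') ∧
          (∀ (s : S) (τ : I → ℝ≥0) (a : ∀ j, extA I A j),
            M.R (s, τ) a = D.R s (fun i => a (some i)))) := by
  classical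
  constructor
  · intro I S A O _ _ _ _ M
    refine ⟨{ F := fun _ _ τ => PMF.pure τ
              T := fun s a _ => M.T s a
              Obs := fun s a _ => M.Obs s a
              R := M.R
              fSel := fun _ _ _ => none
              fSelC := fun _ _ _ => none
              gSel := fun _ i a j => if h : j = i then some (a j) else none
              gSelC := fun _ _ _ => none
              hSel := fun _ i o j => if h : j = i then some (o j) else none
              hSelC := fun _ _ _ => none }, rfl, fun _ _ _ => rfl, fun _ _ _ => rfl,
            ?_, ?_, fun _ _ _ => rfl, fun _ _ _ => rfl⟩
    · intro τ i a
      exact ⟨by simp, fun j hj => dif_neg hj⟩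
    · intro τ i o
      exact ⟨by simp, fun j hj => dif_neg hj⟩
  · intro I S A O _ _ _ _ D
    refine ⟨{ T := fun p a => (D.T p.1 (fun i => a (some i)) p.2).bind fun s' =>
                (D.F s' (fun i => a (some i)) p.2).map fun τ' => (s', τ')
              Obs := fun p a => (D.Obs p.1 (fun i => a (some i)) p.2).map
                (fun o j => match j with
                  | none => (fun _ => [] : ∀ i, List (A i × O i))
                  | some i => o i)
              R := fun p a => D.R p.1 (fun i => a (some i)) }, ?_, ?_, fun _ _ _ => rfl⟩
    · intro s τ a s' τ'
      simp only [PMF.bind_apply, PMF.map_apply]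
      rw [tsum_eq_single s' ?h]
      case h =>
        intro b hb
        rw [ENNReal.summable.tsum_eq_zero_iff |>.mpr, mul_zero]
        intro τ''
        simp [Prod.ext_iff, Ne.symm hb]
      rw [tsum_eq_single τ' ?h2]
      case h2 =>
        intro τ'' hτ
        simp [Prod.ext_iff, Ne.symm hτ]
      simp [mul_comm]
    · intro s' τ' a
      rw [PMF.map_comp]
      exact PMF.map_id _
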